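/- If A ∈ 𝔄 has the expansion A = Σ_{𝔍,𝔍'∈𝒫₊} a_{𝔍𝔍'}·Θ(C_𝔍)∘C_{𝔍'}, then A* has coefficients q_𝔍·q_{𝔍'}·conj(a_{𝔍𝔍'}). Moreover, A is hermitian (A* = A) if and only if s_𝔍·s_{𝔍'}·a_{𝔍𝔍'} is real for all 𝔍, 𝔍' ∈ 𝒫₊. -/

import Mathlib

open ComplexOrder

noncomputable section

/-- The setting of the paper: a finite set `Λ` with a fixed-point free involution `ϑ`
exchanging `Λp` and its complement, the Clifford algebra (algebra of Majoranas) `carrier`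
with self-adjoint generators `c i`, the global gauge automorphism `gauge`, the antilinear
reflection `*`-automorphism `Θ`, a square root `ζ` of `-1`, the twisted product `twist`,
a choice `P` of orderings of the subsets of `Λp` (giving the bases
`{C J : J ∈ P}` of `𝔄₊` and `{Θ(C J) ∘ C J' : J, J' ∈ P}` of `𝔄`),
and the tracial state `Tr` picking out the coefficient of `1` in the basis expansion. -/
structure MajoranaSetting where
  Λ : Type
  [fintypeΛ : Fintype Λ]
  [deceqΛ : DecidableEq Λ]
  ϑ : Λ → Λ
  ϑ_invol : Function.Involutive ϑ
  ϑ_fixfree : ∀ i, ϑ i ≠ i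
  Λp : Finset Λ
  ϑ_exch : ∀ i, i ∈ Λp ↔ ϑ i ∉ Λp
  carrier : Type
  [nring : NormedRing carrier]
  [nalg : NormedAlgebra ℂ carrier]
  [cmpl : CompleteSpace carrier]
  [starring : StarRing carrier]
  [starmod : StarModule ℂ carrier]
  c : Λ → carrier
  c_star : ∀ i, star (c i) = c i
  clifford : ∀ i j, c i * c j + c j * c i = if i = j then (2 : carrier) else 0
  gauge : carrier ≃ₐ[ℂ] carrier
  gauge_c : ∀ i, gauge (c i) = - c i
  Θ : carrier → carrier
  Θ_add : ∀ x y, Θ (x + y) = Θ x + Θ y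
  Θ_smul : ∀ (z : ℂ) (x), Θ (z • x) = (starRingEnd ℂ z) • Θ x
  Θ_mul : ∀ x y, Θ (x * y) = Θ x * Θ y
  Θ_star : ∀ x, Θ (star x) = star (Θ x)
  Θ_invol : ∀ x, Θ (Θ x) = x
  Θ_c : ∀ i, Θ (c i) = c (ϑ i)
  ζ : ℂ
  ζ_sq : ζ ^ 2 = -1
  twist : carrier → carrier → carrier
  twist_add_left : ∀ x x' y, twist (x + x') y = twist x y + twist x' y
  twist_add_right : ∀ x y y', twist x (y + y') = twist x y + twist x y'
  twist_smul_left : ∀ (z : ℂ) (x y), twist (z • x) y = z • twist x y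
  twist_smul_right : ∀ (z : ℂ) (x y), twist x (z • y) = z • twist x y
  twist_spec : ∀ (Am Ap Bm Bp : carrier) (a b a' b' : ℕ),
    a ≤ 1 → b ≤ 1 → a' ≤ 1 → b' ≤ 1 →
    Am ∈ Algebra.adjoin ℂ (c '' {i | i ∉ Λp}) →
    Ap ∈ Algebra.adjoin ℂ (c '' {i | i ∈ Λp}) →
    Bm ∈ Algebra.adjoin ℂ (c '' {i | i ∉ Λp}) →
    Bp ∈ Algebra.adjoin ℂ (c '' {i | i ∈ Λp}) →
    gauge Am = ((-1 : ℂ) ^ a) • Am →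
    gauge Ap = ((-1 : ℂ) ^ b) • Ap →
    gauge Bm = ((-1 : ℂ) ^ a') • Bm →
    gauge Bp = ((-1 : ℂ) ^ b') • Bp →
    twist (Am * Ap) (Bm * Bp)
      = ζ ^ ((a * b' : ℤ) - (b * a' : ℤ)) • (Am * Ap * (Bm * Bp))
  P : Finset (List Λ)
  P_nodup : ∀ J ∈ P, J.Nodup
  P_sub : ∀ J ∈ P, ∀ i ∈ J, i ∈ Λp
  P_unique : ∀ s : Finset Λ, s ⊆ Λp → ∃! J, J ∈ P ∧ J.toFinset = s
  Tr : carrier →ₗ[ℂ] ℂ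
  Tr_basis : ∀ J ∈ P, ∀ J' ∈ P,
    Tr (twist (Θ ((J.map c).prod)) ((J'.map c).prod))
      = if J = [] ∧ J' = [] then 1 else 0
  basis_indep : LinearIndependent ℂ
    (fun p : {J // J ∈ P} × {J // J ∈ P} =>
      twist (Θ ((p.1.1.map c).prod)) ((p.2.1.map c).prod))
  basis_span : ∀ x : carrier, x ∈ Submodule.span ℂ
    (Set.range fun p : {J // J ∈ P} × {J // J ∈ P} =>
      twist (Θ ((p.1.1.map c).prod)) ((p.2.1.map c).prod))
  plus_span : ∀ x ∈ Algebra.adjoin ℂ (c '' {i | i ∈ Λp}),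
    x ∈ Submodule.span ℂ (Set.range fun J : {J // J ∈ P} => ((J.1.map c).prod))

attribute [instance] MajoranaSetting.fintypeΛ MajoranaSetting.deceqΛ
  MajoranaSetting.nring MajoranaSetting.nalg MajoranaSetting.cmpl
  MajoranaSetting.starring MajoranaSetting.starmod

namespace MajoranaSetting

variable (S : MajoranaSetting)

/-- The subalgebra `𝔄₊` generated by the Majoranas on the `+` side. -/
def Aplus : Subalgebra ℂ S.carrier := Algebra.adjoin ℂ (S.c '' {i | i ∈ S.Λp})

/-- The subalgebra `𝔄₋` generated by the Majoranas on the `-` side. -/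
def Aminus : Subalgebra ℂ S.carrier := Algebra.adjoin ℂ (S.c '' {i | i ∉ S.Λp})

/-- The monomial `C_𝔍 = c_{i₁} ⋯ c_{i_k}`. -/
def C (J : List S.Λ) : S.carrier := (J.map S.c).prod

/-- `q_𝔍 = (-1)^{k(k-1)/2}`. -/
def q (J : List S.Λ) : ℂ := (-1 : ℂ) ^ (J.length * (J.length - 1) / 2)

/-- `s_𝔍 = ζ^{k(k-1)/2}`. -/
def sgn (J : List S.Λ) : ℂ := S.ζ ^ (J.length * (J.length - 1) / 2)

/-- The exponential `e^x` in the (finite-dimensional) algebra `𝔄`. -/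
def expm (x : S.carrier) : S.carrier := NormedSpace.exp x

/-- The Hamiltonian `H = -∑_{𝔍,𝔍' ∈ 𝒫₊} J_{𝔍𝔍'} Θ(C_𝔍) ∘ C_𝔍'`
determined by coupling constants `Jc`. -/
def Ham (Jc : List S.Λ → List S.Λ → ℂ) : S.carrier :=
  - ∑ J ∈ S.P, ∑ J' ∈ S.P, Jc J J' • S.twist (S.Θ (S.C J)) (S.C J')

/-- The index type of the basis `{C J : J ∈ 𝒫₊}`. -/
abbrev PIdx := {J : List S.Λ // J ∈ S.P}

/-- The index type `𝒫₊ - {∅}` of couplings across the reflection plane. -/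
abbrev PIdx0 := {p : S.PIdx // p.1 ≠ []}

/-- The full matrix of coupling constants. -/
def Jmat (Jc : List S.Λ → List S.Λ → ℂ) : Matrix S.PIdx S.PIdx ℂ :=
  Matrix.of fun p q => Jc p.1 q.1

/-- The matrix `J⁰` of coupling constants across the reflection plane. -/
def Jmat0 (Jc : List S.Λ → List S.Λ → ℂ) : Matrix S.PIdx0 S.PIdx0 ℂ :=
  Matrix.of fun p q => Jc p.1.1 q.1.1

end MajoranaSetting


namespace MajoranaSetting

variable (S : MajoranaSetting)

lemma Θ_one : S.Θ 1 = 1 := by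
  have h := S.Θ_mul (S.Θ 1) 1
  rw [mul_one, S.Θ_invol, one_mul] at h
  exact h.symm

lemma anticomm {i j : S.Λ} (h : i ≠ j) : S.c i * S.c j = - (S.c j * S.c i) := by
  have hc := S.clifford i j
  rw [if_neg h] at hc
  exact eq_neg_of_add_eq_zero_left hc

lemma prod_mul_c (a : S.Λ) : ∀ (J : List S.Λ), a ∉ J →
    (J.map S.c).prod * S.c a = ((-1:ℂ) ^ J.length) • (S.c a * (J.map S.c).prod)
  | [], _ => by simp
  | b :: J, h => by
    have hb : a ≠ b := fun e => h (e ▸ List.mem_cons_self (a := b) (l := J))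
    have hJ : a ∉ J := fun e => h (List.mem_cons_of_mem _ e)
    simp only [List.map_cons, List.prod_cons, List.length_cons]
    rw [mul_assoc, prod_mul_c a J hJ, mul_smul_comm]
    rw [← mul_assoc, S.anticomm hb.symm, neg_mul, mul_assoc, smul_neg, ← neg_smul]
    congr 1
    rw [pow_succ]; ring

lemma tri_succ (n : ℕ) : (n+1)*n/2 = n*(n-1)/2 + n := by
  cases n with
  | zero => rfl
  | succ m =>
    rw [Nat.succ_sub_one, show (m+1+1)*(m+1) = (m+1)*m + 2*(m+1) by ring,
      Nat.add_mul_div_left _ _ (by norm_num : 0 < 2)]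

lemma star_prod_c : ∀ (J : List S.Λ), J.Nodup →
    star ((J.map S.c).prod)
      = ((-1:ℂ) ^ (J.length * (J.length - 1) / 2)) • (J.map S.c).prod
  | [], _ => by simp
  | a :: J, hJ => by
    obtain ⟨ha, hJ'⟩ := List.nodup_cons.mp hJ
    simp only [List.map_cons, List.prod_cons, List.length_cons, star_mul, S.c_star]
    rw [star_prod_c J hJ', smul_mul_assoc, S.prod_mul_c a J ha, smul_smul, ← pow_add]
    congr 2
    simp only [Nat.add_sub_cancel]
    exact (tri_succ J.length).symm

lemma prod_comm_sign (L1 : List S.Λ) : ∀ (L2 : List S.Λ), (∀ i ∈ L1, ∀ j ∈ L2, i ≠ j) →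
    (L1.map S.c).prod * (L2.map S.c).prod
      = ((-1:ℂ) ^ (L1.length * L2.length)) • ((L2.map S.c).prod * (L1.map S.c).prod)
  | [], _ => by simp
  | a :: L2, h => by
    have ha : a ∉ L1 := fun e => h a e a (List.mem_cons_self (a := a) (l := L2)) rfl
    have h2 : ∀ i ∈ L1, ∀ j ∈ L2, i ≠ j := fun i hi j hj =>
      h i hi j (List.mem_cons_of_mem _ hj)
    simp only [List.map_cons, List.prod_cons, List.length_cons]
    rw [← mul_assoc, S.prod_mul_c a L1 ha, smul_mul_assoc, mul_assoc,
      prod_comm_sign L1 L2 h2, mul_smul_comm, smul_smul, ← pow_add, ← mul_assoc]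
    congr 2
    ring

lemma gauge_prod (J : List S.Λ) :
    S.gauge ((J.map S.c).prod) = ((-1:ℂ) ^ J.length) • (J.map S.c).prod := by
  induction J with
  | nil => simp
  | cons a J ih =>
    simp only [List.map_cons, List.prod_cons, map_mul, S.gauge_c, ih, List.length_cons]
    rw [mul_smul_comm, neg_mul, smul_neg, ← neg_smul]
    congr 1
    rw [pow_succ]; ring

lemma prod_mem_adjoin (s : Set S.Λ) : ∀ (J : List S.Λ), (∀ i ∈ J, i ∈ s) →
    (J.map S.c).prod ∈ Algebra.adjoin ℂ (S.c '' s)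
  | [], _ => by simp only [List.map_nil, List.prod_nil]; exact one_mem _
  | a :: J, h => by
    simp only [List.map_cons, List.prod_cons]
    exact mul_mem (Algebra.subset_adjoin ⟨a, h a (List.mem_cons_self (a := a) (l := J)), rfl⟩)
      (prod_mem_adjoin s J (fun i hi => h i (List.mem_cons_of_mem _ hi)))

lemma neg_one_pow_mod (k : ℕ) : ((-1:ℂ))^k = (-1)^(k % 2) := by
  conv_lhs => rw [← Nat.div_add_mod k 2]
  rw [pow_add, pow_mul]
  simp

lemma Θ_C (J : List S.Λ) : S.Θ (S.C J) = S.C (J.map S.ϑ) := by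
  induction J with
  | nil => exact S.Θ_one
  | cons a J ih =>
    simp only [C, List.map_cons, List.prod_cons] at *
    rw [S.Θ_mul, S.Θ_c, ih]

lemma ζ_ne_zero : S.ζ ≠ 0 := by
  intro h
  have := S.ζ_sq
  rw [h] at this
  simp at this

lemma conj_ζ : starRingEnd ℂ S.ζ = - S.ζ := by
  have h : (S.ζ - Complex.I) * (S.ζ + Complex.I) = 0 := by
    linear_combination S.ζ_sq - Complex.I_sq
  rcases mul_eq_zero.mp h with h | h
  · rw [sub_eq_zero.mp h]; simp [Complex.conj_I]
  · rw [eq_neg_of_add_eq_zero_left h]; simp [Complex.conj_I]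

lemma twist_eq (J J' : List S.Λ) (hJ : ∀ i ∈ J, i ∈ S.Λp) (hJ' : ∀ i ∈ J', i ∈ S.Λp) :
    S.twist (S.Θ (S.C J)) (S.C J')
      = S.ζ ^ ((J.length % 2) * (J'.length % 2)) • (S.Θ (S.C J) * S.C J') := by
  rw [S.Θ_C]
  have hmem : S.C (J.map S.ϑ) ∈ Algebra.adjoin ℂ (S.c '' {i | i ∉ S.Λp}) := by
    apply S.prod_mem_adjoin
    intro x hx
    obtain ⟨i, hi, rfl⟩ := List.mem_map.mp hx
    exact (S.ϑ_exch i).mp (hJ i hi)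
  have hmem' : S.C J' ∈ Algebra.adjoin ℂ (S.c '' {i | i ∈ S.Λp}) :=
    S.prod_mem_adjoin _ J' hJ'
  have hg1 : S.gauge (S.C (J.map S.ϑ)) = ((-1:ℂ) ^ (J.length % 2)) • S.C (J.map S.ϑ) := by
    rw [C, S.gauge_prod, List.length_map, neg_one_pow_mod]
  have hg2 : S.gauge (S.C J') = ((-1:ℂ) ^ (J'.length % 2)) • S.C J' := by
    rw [C, S.gauge_prod, neg_one_pow_mod]
  have h := S.twist_spec (S.C (J.map S.ϑ)) 1 1 (S.C J')
    (J.length % 2) 0 0 (J'.length % 2)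
    (by omega) (by omega) (by omega) (by omega)
    hmem (one_mem _) (one_mem _) hmem'
    hg1 (by simp) (by simp) hg2
  simp only [mul_one, one_mul] at h
  rw [h]
  congr 1

lemma star_basis (J J' : List S.Λ) (hJ : J ∈ S.P) (hJ' : J' ∈ S.P) :
    star (S.twist (S.Θ (S.C J)) (S.C J'))
      = (S.q J * S.q J') • S.twist (S.Θ (S.C J)) (S.C J') := by
  have hJp := S.P_sub J hJ
  have hJp' := S.P_sub J' hJ'
  have hnd := S.P_nodup J hJ
  have hnd' := S.P_nodup J' hJ'
  have hndm : (J.map S.ϑ).Nodup := hnd.map S.ϑ_invol.injective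
  have hdisj : ∀ i ∈ J', ∀ j ∈ J.map S.ϑ, i ≠ j := by
    intro i hi j hj e
    obtain ⟨k, hk, rfl⟩ := List.mem_map.mp hj
    exact (S.ϑ_exch k).mp (hJp k hk) (e ▸ hJp' i hi)
  rw [S.twist_eq J J' hJp hJp', star_smul, star_mul, S.Θ_C, C, C,
    S.star_prod_c (J.map S.ϑ) hndm, S.star_prod_c J' hnd',
    smul_mul_assoc, mul_smul_comm, S.prod_comm_sign J' (J.map S.ϑ) hdisj]
  simp only [List.length_map, smul_smul, C]
  congr 1
  rw [← starRingEnd_apply, map_pow, S.conj_ζ, neg_pow]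
  have hpar : ((-1:ℂ)) ^ (J'.length * J.length)
      * (-1) ^ (J.length % 2 * (J'.length % 2)) = 1 := by
    rw [← pow_add, neg_one_pow_mod]
    have : (J'.length * J.length + J.length % 2 * (J'.length % 2)) % 2 = 0 := by
      rw [Nat.add_mod, Nat.mul_mod J'.length J.length,
        Nat.mul_comm (J.length % 2) (J'.length % 2)]
      generalize (J'.length % 2) * (J.length % 2) = x
      omega
    rw [this, pow_zero]
  unfold q
  linear_combination (S.ζ ^ (J.length % 2 * (J'.length % 2))
      * ((-1:ℂ)) ^ (J'.length * (J'.length - 1) / 2)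
      * ((-1:ℂ)) ^ (J.length * (J.length - 1) / 2)) * hpar

lemma conj_sgn (J : List S.Λ) : starRingEnd ℂ (S.sgn J) = S.q J * S.sgn J := by
  unfold sgn q
  rw [map_pow, S.conj_ζ, neg_pow]

lemma sgn_ne_zero (J : List S.Λ) : S.sgn J ≠ 0 := pow_ne_zero _ S.ζ_ne_zero

end MajoranaSetting

/-- `A*` has coefficients `q_𝔍 q_𝔍' conj(a_{𝔍𝔍'})`, and `A` is hermitian
iff `s_𝔍 s_𝔍' a_{𝔍𝔍'}` is real for all `𝔍, 𝔍' ∈ 𝒫₊`. -/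
theorem adjoint_coeffs_and_hermitian (S : MajoranaSetting)
    (a : List S.Λ → List S.Λ → ℂ) (A : S.carrier)
    (hA : A = ∑ J ∈ S.P, ∑ J' ∈ S.P, a J J' • S.twist (S.Θ (S.C J)) (S.C J')) :
    (star A = ∑ J ∈ S.P, ∑ J' ∈ S.P,
        (S.q J * S.q J' * starRingEnd ℂ (a J J')) • S.twist (S.Θ (S.C J)) (S.C J')) ∧
    (star A = A ↔ ∀ J ∈ S.P, ∀ J' ∈ S.P,
        starRingEnd ℂ (S.sgn J * S.sgn J' * a J J') = S.sgn J * S.sgn J' * a J J') := by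
  classical
  have hstar : star A = ∑ J ∈ S.P, ∑ J' ∈ S.P,
      (S.q J * S.q J' * starRingEnd ℂ (a J J')) • S.twist (S.Θ (S.C J)) (S.C J') := by
    rw [hA, star_sum]
    refine Finset.sum_congr rfl fun J hJ => ?_
    rw [star_sum]
    refine Finset.sum_congr rfl fun J' hJ' => ?_
    rw [star_smul, S.star_basis J J' hJ hJ', smul_smul]
    congr 1
    rw [starRingEnd_apply]
    ring
  have key : ∀ g : List S.Λ → List S.Λ → ℂ,
      (∑ J ∈ S.P, ∑ J' ∈ S.P, g J J' • S.twist (S.Θ (S.C J)) (S.C J')) = 0 →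
      ∀ J ∈ S.P, ∀ J' ∈ S.P, g J J' = 0 := by
    intro g hg J hJ J' hJ'
    have h2 : ∑ p : S.PIdx × S.PIdx,
        g p.1.1 p.2.1 • S.twist (S.Θ ((p.1.1.map S.c).prod)) ((p.2.1.map S.c).prod) = 0 := by
      rw [Fintype.sum_prod_type]
      simp only [Finset.univ_eq_attach]
      rw [Finset.sum_congr rfl (fun (x : {J // J ∈ S.P}) (_ : x ∈ S.P.attach) =>
        Finset.sum_attach S.P (fun y =>
          g x.1 y • S.twist (S.Θ ((x.1.map S.c).prod)) ((y.map S.c).prod)))]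
      rw [Finset.sum_attach S.P (fun x =>
        ∑ y ∈ S.P, g x y • S.twist (S.Θ ((x.map S.c).prod)) ((y.map S.c).prod))]
      simpa [MajoranaSetting.C] using hg
    exact Fintype.linearIndependent_iff.mp S.basis_indep
      (fun p => g p.1.1 p.2.1) h2 ⟨⟨J, hJ⟩, ⟨J', hJ'⟩⟩
  have hqs : ∀ J J' : List S.Λ,
      (S.q J * S.q J' * starRingEnd ℂ (a J J') = a J J') ↔
      (starRingEnd ℂ (S.sgn J * S.sgn J' * a J J') = S.sgn J * S.sgn J' * a J J') := by
    intro J J'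
    have hne : S.sgn J * S.sgn J' ≠ 0 := mul_ne_zero (S.sgn_ne_zero J) (S.sgn_ne_zero J')
    rw [map_mul, map_mul, S.conj_sgn, S.conj_sgn]
    constructor
    · intro h
      linear_combination (S.sgn J * S.sgn J') * h
    · intro h
      have h2 : S.sgn J * S.sgn J' * (S.q J * S.q J' * starRingEnd ℂ (a J J'))
          = S.sgn J * S.sgn J' * a J J' := by linear_combination h
      exact mul_left_cancel₀ hne h2
  refine ⟨hstar, ?_, ?_⟩
  · intro hsa J hJ J' hJ'
    have heq : (∑ J ∈ S.P, ∑ J' ∈ S.P,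
          (S.q J * S.q J' * starRingEnd ℂ (a J J')) • S.twist (S.Θ (S.C J)) (S.C J'))
        = ∑ J ∈ S.P, ∑ J' ∈ S.P, a J J' • S.twist (S.Θ (S.C J)) (S.C J') := by
      rw [← hstar, hsa, ← hA]
    have h0 : (∑ J ∈ S.P, ∑ J' ∈ S.P,
        ((S.q J * S.q J' * starRingEnd ℂ (a J J')) - a J J')
          • S.twist (S.Θ (S.C J)) (S.C J')) = 0 := by
      simp only [sub_smul, Finset.sum_sub_distrib]
      rw [heq, sub_self]
    exact (hqs J J').mp (sub_eq_zero.mp (key _ h0 J hJ J' hJ'))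
  · intro hre
    rw [hstar, hA]
    refine Finset.sum_congr rfl fun J hJ => Finset.sum_congr rfl fun J' hJ' => ?_
    rw [(hqs J J').mpr (hre J hJ J' hJ')]
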